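/- Let x be a complex number with |x| > 27. Then ∑_{k=0}^∞ (C(2k,k)·C(3k,k)/x^k)·(3H_{3k} − H_k) = log(x/(x−27)) · ∑_{k=0}^∞ C(2k,k)·C(3k,k)/x^k, both series being convergent. -/

import Mathlib

/-- The `n`-th harmonic number `H_n = ∑_{i=1}^n 1/i`. -/
noncomputable def harm (n : ℕ) : ℝ := ∑ i ∈ Finset.range n, 1 / (i + 1 : ℝ)


noncomputable def Aa (n : ℕ) : ℝ := (3 * n).factorial / ((n.factorial : ℝ))^3

lemma Aa_pos (n : ℕ) : 0 < Aa n := div_pos (by positivity) (by positivity)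

lemma Aa_zero : Aa 0 = 1 := by simp [Aa]

lemma Aa_rec (m : ℕ) : Aa (m+1) * ((m:ℝ)+1)^2 = 3*(3*(m:ℝ)+2)*(3*(m:ℝ)+1) * Aa m := by
  have h3 : 3*(m+1) = (3*m) + 1 + 1 + 1 := by ring
  unfold Aa
  rw [h3]
  simp only [Nat.factorial_succ]
  have h1 : ((m.factorial : ℝ)) ≠ 0 := Nat.cast_ne_zero.2 (Nat.factorial_ne_zero _)
  push_cast
  field_simp
  ring

lemma choose_eq (k : ℕ) : ((Nat.choose (2*k) k : ℝ) * (Nat.choose (3*k) k : ℝ)) = Aa k := by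
  rw [Nat.cast_choose ℝ (by omega : k ≤ 2*k), Nat.cast_choose ℝ (by omega : k ≤ 3*k)]
  have h1 : 2*k - k = k := by omega
  have h2 : 3*k - k = 2*k := by omega
  rw [h1, h2]
  unfold Aa
  have e1 : ((k.factorial : ℝ)) ≠ 0 := Nat.cast_ne_zero.2 (Nat.factorial_ne_zero _)
  have e2 : (((2*k).factorial : ℝ)) ≠ 0 := Nat.cast_ne_zero.2 (Nat.factorial_ne_zero _)
  field_simp

lemma Aa_le (n : ℕ) : Aa n ≤ 27^n := by
  induction n with
  | zero => simp [Aa_zero]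
  | succ n ih =>
    have hr := Aa_rec n
    have hp := Aa_pos n
    have hn : (0:ℝ) < ((n:ℝ)+1)^2 := by positivity
    have : Aa (n+1) = 3*(3*(n:ℝ)+2)*(3*(n:ℝ)+1) * Aa n / ((n:ℝ)+1)^2 := by
      field_simp at hr ⊢; linarith
    rw [this, div_le_iff₀ hn, pow_succ, mul_comm ((27:ℝ)^n) 27]
    have hnn : (0:ℝ) ≤ (n:ℝ) := Nat.cast_nonneg n
    nlinarith [mul_le_mul_of_nonneg_left ih (by norm_num : (0:ℝ) ≤ 27)]


lemma cert_real (mr ir Am Am1 : ℝ) (hm : 0 ≤ mr) (hi : 0 ≤ ir)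
    (hrec : Am1 * (mr+1)^2 = 3*(3*mr+2)*(3*mr+1)*Am) :
    1/(ir+1) * (Am1 - (3*(3*(mr+ir+2)-1)*(3*(mr+ir+2)-2)/(mr+ir+2)^2) * Am)
      = 27 * Am * ((ir+2) - 2*(mr+ir+2))/(mr+ir+2)^2
        - Am1*((ir+1)-2*(mr+ir+2))/(mr+ir+2)^2 := by
  have h1 : (mr+1) ≠ 0 := by positivity
  have h2 : (ir+1) ≠ 0 := by positivity
  have h3 : (mr+ir+2) ≠ 0 := by positivity
  have hA : Am1 = 3*(3*mr+2)*(3*mr+1)*Am / (mr+1)^2 := by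
    field_simp
    ring
    linarith [hrec]
  rw [hA]
  field_simp
  ring

lemma key (n : ℕ) :
    ∑ j ∈ Finset.range (n+1), (27:ℝ)^j / (j:ℝ) * Aa (n-j)
      = Aa n * (3 * harm (3*n) - harm n) := by
  induction n with
  | zero => simp [harm]
  | succ n ih =>
    have hn1 : (0:ℝ) < (n:ℝ) + 1 := by positivity
    have hrec := Aa_rec n
    -- peel j = 0
    have step1 : ∑ j ∈ Finset.range (n+1+1), (27:ℝ)^j / (j:ℝ) * Aa (n+1-j)
        = ∑ i ∈ Finset.range (n+1), (27:ℝ)^(i+1) / ((i:ℝ)+1) * Aa (n-i) := by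
      rw [Finset.sum_range_succ']
      simp [Nat.succ_sub_succ]
    have step2 : ∑ j ∈ Finset.range (n+1), (27:ℝ)^j / (j:ℝ) * Aa (n-j)
        = ∑ i ∈ Finset.range n, (27:ℝ)^(i+1) / ((i:ℝ)+1) * Aa (n-(i+1)) := by
      rw [Finset.sum_range_succ']
      simp
    set c : ℝ := 3*(3*(n:ℝ)+2)*(3*(n:ℝ)+1) / ((n:ℝ)+1)^2 with hc
    set G : ℕ → ℝ := fun j => 27^j * Aa (n+1-j) * ((j:ℝ) - 2*((n:ℝ)+1)) / ((n:ℝ)+1)^2 with hG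
    have percert : ∀ i ∈ Finset.range n,
        (27:ℝ)^(i+1) / ((i:ℝ)+1) * Aa (n-i) - (27:ℝ)^(i+1) / ((i:ℝ)+1) * (c * Aa (n-(i+1)))
          = G (i+1+1) - G (i+1) := by
      intro i hi
      rw [Finset.mem_range] at hi
      obtain ⟨m, hm⟩ : ∃ m, n = m + i + 1 := ⟨n - i - 1, by omega⟩
      have e1 : n - i = m + 1 := by omega
      have e2 : n - (i+1) = m := by omega
      have e3 : n + 1 - (i+1) = m + 1 := by omega
      have e4 : n + 1 - (i+1+1) = m := by omega
      have e5 : (n:ℝ) = (m:ℝ) + (i:ℝ) + 1 := by rw [hm]; push_cast; ring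
      rw [e1, e2, hG]
      simp only [e3, e4]
      have hcert := cert_real (m:ℝ) (i:ℝ) (Aa m) (Aa (m+1)) (Nat.cast_nonneg m)
        (Nat.cast_nonneg i) (by push_cast [Aa_rec m]; ring)
      have hmain : (27:ℝ)^(i+1) * (1/((i:ℝ)+1) * (Aa (m+1) - (3*(3*((m:ℝ)+(i:ℝ)+2)-1)*(3*((m:ℝ)+(i:ℝ)+2)-2)/((m:ℝ)+(i:ℝ)+2)^2) * Aa m))
          = (27:ℝ)^(i+1) * (27 * Aa m * (((i:ℝ)+2) - 2*((m:ℝ)+(i:ℝ)+2))/((m:ℝ)+(i:ℝ)+2)^2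
            - Aa (m+1)*(((i:ℝ)+1)-2*((m:ℝ)+(i:ℝ)+2))/((m:ℝ)+(i:ℝ)+2)^2) := by
        rw [hcert]
      rw [hc]
      push_cast
      rw [e5]
      have hNe : (m:ℝ)+(i:ℝ)+2 = ((m:ℝ)+(i:ℝ)+1)+1 := by ring
      calc (27:ℝ)^(i+1) / ((i:ℝ)+1) * Aa (m+1)
            - 27^(i+1)/((i:ℝ)+1) * (3*(3*((m:ℝ)+(i:ℝ)+1)+2)*(3*((m:ℝ)+(i:ℝ)+1)+1)/(((m:ℝ)+(i:ℝ)+1)+1)^2 * Aa m)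
          = (27:ℝ)^(i+1) * (1/((i:ℝ)+1) * (Aa (m+1) - (3*(3*((m:ℝ)+(i:ℝ)+2)-1)*(3*((m:ℝ)+(i:ℝ)+2)-2)/((m:ℝ)+(i:ℝ)+2)^2) * Aa m)) := by
            ring
        _ = (27:ℝ)^(i+1) * (27 * Aa m * (((i:ℝ)+2) - 2*((m:ℝ)+(i:ℝ)+2))/((m:ℝ)+(i:ℝ)+2)^2
            - Aa (m+1)*(((i:ℝ)+1)-2*((m:ℝ)+(i:ℝ)+2))/((m:ℝ)+(i:ℝ)+2)^2) := hmain
        _ = 27^(i+1+1) * Aa m * ((i:ℝ)+1+1 - 2*(((m:ℝ)+(i:ℝ)+1)+1)) / ((((m:ℝ)+(i:ℝ)+1))+1)^2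
            - 27^(i+1) * Aa (m+1) * ((i:ℝ)+1 - 2*(((m:ℝ)+(i:ℝ)+1)+1)) / ((((m:ℝ)+(i:ℝ)+1))+1)^2 := by
            ring
    have tele : ∑ i ∈ Finset.range n, (G (i+1+1) - G (i+1)) = G (n+1) - G 1 :=
      Finset.sum_range_sub (fun i => G (i+1)) n
    have split : ∑ i ∈ Finset.range n, (27:ℝ)^(i+1) / ((i:ℝ)+1) * Aa (n-i)
        = (∑ i ∈ Finset.range n, ((27:ℝ)^(i+1) / ((i:ℝ)+1) * Aa (n-i)
            - (27:ℝ)^(i+1) / ((i:ℝ)+1) * (c * Aa (n-(i+1)))))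
          + c * ∑ i ∈ Finset.range n, (27:ℝ)^(i+1) / ((i:ℝ)+1) * Aa (n-(i+1)) := by
      rw [Finset.mul_sum, ← Finset.sum_add_distrib]
      apply Finset.sum_congr rfl
      intro i _
      ring
    have sumeq : ∑ i ∈ Finset.range n, ((27:ℝ)^(i+1) / ((i:ℝ)+1) * Aa (n-i)
            - (27:ℝ)^(i+1) / ((i:ℝ)+1) * (c * Aa (n-(i+1)))) = G (n+1) - G 1 := by
      rw [← tele]
      exact Finset.sum_congr rfl percert
    have hG1 : G 1 = 27 * Aa n * (1 - 2*((n:ℝ)+1)) / ((n:ℝ)+1)^2 := by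
      rw [hG]; norm_num
    have hGn : G (n+1) = 27^(n+1) * (((n:ℝ)+1) - 2*((n:ℝ)+1)) / ((n:ℝ)+1)^2 := by
      rw [hG]
      simp only [Nat.sub_self, Aa_zero]
      push_cast
      ring
    have hh3 : harm (3*(n+1)) = harm (3*n) + 1/(3*(n:ℝ)+1) + 1/(3*(n:ℝ)+2) + 1/(3*(n:ℝ)+3) := by
      have h : 3*(n+1) = (3*n)+1+1+1 := by ring
      rw [h]
      unfold harm
      rw [Finset.sum_range_succ, Finset.sum_range_succ, Finset.sum_range_succ]
      push_cast
      ring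
    have hh1 : harm (n+1) = harm n + 1/((n:ℝ)+1) := by
      unfold harm
      rw [Finset.sum_range_succ]
    have hA1 : Aa (n+1) = 3*(3*(n:ℝ)+2)*(3*(n:ℝ)+1) * Aa n / ((n:ℝ)+1)^2 := by
      rw [eq_div_iff (by positivity : ((n:ℝ)+1)^2 ≠ 0)]
      linarith [hrec]
    rw [step1, Finset.sum_range_succ, split, sumeq, step2.symm, ih, hGn, hG1, hA1, hh3, hh1,
      Nat.sub_self, Aa_zero, hc]
    push_cast
    have h2 : (3*(n:ℝ)+1) ≠ 0 := by positivity
    have h3 : (3*(n:ℝ)+2) ≠ 0 := by positivity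
    have h4 : (3*(n:ℝ)+3) ≠ 0 := by positivity
    field_simp
    ring


theorem stmt_9 (x : ℂ) (hx : ‖x‖ > 27) :
    Summable (fun k : ℕ => (((Nat.choose (2 * k) k : ℝ) * (Nat.choose (3 * k) k : ℝ) : ℝ) : ℂ) / x ^ k * ((3 * harm (3 * k) - harm k : ℝ) : ℂ)) ∧
    Summable (fun k : ℕ => (((Nat.choose (2 * k) k : ℝ) * (Nat.choose (3 * k) k : ℝ) : ℝ) : ℂ) / x ^ k) ∧
    ∑' k : ℕ, (((Nat.choose (2 * k) k : ℝ) * (Nat.choose (3 * k) k : ℝ) : ℝ) : ℂ) / x ^ k * ((3 * harm (3 * k) - harm k : ℝ) : ℂ) =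
      Complex.log (x / (x - 27)) * ∑' k : ℕ, (((Nat.choose (2 * k) k : ℝ) * (Nat.choose (3 * k) k : ℝ) : ℝ) : ℂ) / x ^ k := by
  have hx0 : x ≠ 0 := by
    intro h; rw [h] at hx; simp at hx; linarith
  have hax : (0:ℝ) < ‖x‖ := by linarith
  set w : ℂ := 27 / x with hw
  have hwn : ‖w‖ < 1 := by
    rw [hw]
    simp only [norm_div]
    rw [div_lt_one hax]
    simpa using hx
  -- the main series
  set F : ℕ → ℂ := fun k => ((Aa k : ℝ) : ℂ) / x ^ k with hF
  set L : ℕ → ℂ := fun j => w ^ j / (j : ℂ) with hL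
  have hFnorm : ∀ k, ‖F k‖ ≤ (27 / ‖x‖) ^ k := by
    intro k
    rw [hF]
    simp only [norm_div, Complex.norm_real, Real.norm_eq_abs, norm_pow, div_pow]
    apply div_le_div_of_nonneg_right ?_ (by positivity)
    · rw [abs_of_pos (Aa_pos k)]
      exact Aa_le k
  set r : ℝ := 27 / ‖x‖ with hr
  have hr0 : 0 ≤ r := by positivity
  have hr1 : r < 1 := by rw [hr, div_lt_one hax]; simpa using hx
  have hFs : Summable (fun k => ‖F k‖) :=
    Summable.of_nonneg_of_le (fun k => norm_nonneg _) hFnorm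
      (summable_geometric_of_lt_one hr0 hr1)
  have hLnorm : ∀ j, ‖L j‖ ≤ ‖w‖ ^ j := by
    intro j
    rw [hL]
    rcases Nat.eq_zero_or_pos j with h | h
    · subst h; simp
    · simp only [norm_div, norm_pow, Complex.norm_natCast]
      apply div_le_self (by positivity)
      exact_mod_cast h
  have hLs : Summable (fun j => ‖L j‖) :=
    Summable.of_nonneg_of_le (fun k => norm_nonneg _) hLnorm
      (summable_geometric_of_lt_one (norm_nonneg w) hwn)
  -- harmonic bounds
  have harm_nonneg : ∀ n, 0 ≤ harm n := by
    intro n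
    apply Finset.sum_nonneg
    intro i _
    positivity
  have harm_le : ∀ n : ℕ, harm n ≤ n := by
    intro n
    calc harm n ≤ ∑ i ∈ Finset.range n, 1 := by
          apply Finset.sum_le_sum
          intro i _
          rw [div_le_one (by positivity)]
          norm_num
      _ = n := by simp
  have habs : ∀ k : ℕ, |3 * harm (3*k) - harm k| ≤ 9 * k := by
    intro k
    rw [abs_le]
    constructor
    · have := harm_le k
      have h2 := harm_nonneg (3*k)
      have : harm k ≤ 9 * k := by
        calc harm k ≤ (k:ℝ) := harm_le k
          _ ≤ 9 * k := by nlinarith [Nat.cast_nonneg (α := ℝ) k]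
      linarith
    · have h1 : harm (3*k) ≤ 3*(k:ℝ) := by
        have := harm_le (3*k)
        push_cast at this
        linarith
      have := harm_nonneg k
      linarith
  -- summability of the weighted series
  have hFHs : Summable (fun k : ℕ => F k * ((3 * harm (3 * k) - harm k : ℝ) : ℂ)) := by
    apply Summable.of_norm_bounded (g := fun k : ℕ => 9 * ((k:ℝ) ^ 1 * r ^ k))
    · exact (summable_pow_mul_geometric_of_norm_lt_one (R := ℝ) (r := r) 1
        (by rwa [Real.norm_eq_abs, abs_of_nonneg hr0])).mul_left 9
    · intro k
      rw [norm_mul]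
      calc ‖F k‖ * ‖((3 * harm (3 * k) - harm k : ℝ) : ℂ)‖
          ≤ r ^ k * (9 * k) := by
            apply mul_le_mul (hFnorm k) ?_ (norm_nonneg _) (by positivity)
            rw [Complex.norm_real, Real.norm_eq_abs]
            exact habs k
        _ = 9 * ((k:ℝ) ^ 1 * r ^ k) := by ring
  -- rewrite statement functions
  have hfun : (fun k : ℕ => (((Nat.choose (2 * k) k : ℝ) * (Nat.choose (3 * k) k : ℝ) : ℝ) : ℂ) / x ^ k) = F := by
    funext k
    rw [choose_eq, hF]
  have hfun2 : (fun k : ℕ => (((Nat.choose (2 * k) k : ℝ) * (Nat.choose (3 * k) k : ℝ) : ℝ) : ℂ) / x ^ k * ((3 * harm (3 * k) - harm k : ℝ) : ℂ))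
      = fun k : ℕ => F k * ((3 * harm (3 * k) - harm k : ℝ) : ℂ) := by
    funext k
    rw [choose_eq, hF]
  refine ⟨by rw [hfun2]; exact hFHs, by rw [hfun]; exact hFs.of_norm, ?_⟩
  rw [hfun, hfun2]
  -- log value
  have hx27 : x - 27 ≠ 0 := by
    intro h
    have : x = 27 := by linear_combination h
    rw [this] at hx
    simp at hx
  have h1w : 1 - w = (x - 27) / x := by
    rw [hw]
    field_simp
  have hrew : 0 < (1 - w).re := by
    have hwn' : ‖w‖ < 1 := hwn
    have h1 := (abs_lt.1 (lt_of_le_of_lt (Complex.abs_re_le_norm w) hwn')).2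
    simp only [Complex.sub_re, Complex.one_re]
    linarith
  have harg : ((x - 27) / x).arg ≠ Real.pi := by
    rw [← h1w]
    intro h
    rw [Complex.arg_eq_pi_iff] at h
    linarith [h.1]
  have hlogsum : HasSum L (Complex.log (x / (x - 27))) := by
    have h := Complex.hasSum_taylorSeries_neg_log hwn
    convert h using 1
    rw [h1w, ← Complex.log_inv _ harg]
    congr 1
    field_simp
  have coef : ∀ n : ℕ, ∑ k ∈ Finset.range (n+1), L k * F (n-k)
      = F n * ((3 * harm (3*n) - harm n : ℝ) : ℂ) := by
    intro n
    have h1 : ∀ k ∈ Finset.range (n+1), L k * F (n-k)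
        = ((27:ℂ)^k / (k:ℂ) * ((Aa (n-k) : ℝ):ℂ)) * (x^n)⁻¹ := by
      intro k hk
      rw [Finset.mem_range] at hk
      have hxp : x ^ n = x ^ k * x ^ (n-k) := by
        rw [← pow_add]; congr 1; omega
      rw [hL, hF, hw]
      simp only
      rw [hxp]
      have hxk : (x:ℂ) ^ k ≠ 0 := pow_ne_zero _ hx0
      have hxnk : (x:ℂ) ^ (n-k) ≠ 0 := pow_ne_zero _ hx0
      rcases Nat.eq_zero_or_pos k with h | h
      · subst h; simp
      · have hkc : ((k:ℕ):ℂ) ≠ 0 := Nat.cast_ne_zero.2 (by omega)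
        field_simp
        ring_nf
        rw [← mul_pow, mul_inv_cancel₀ hx0, one_pow, one_mul]
    rw [Finset.sum_congr rfl h1, ← Finset.sum_mul]
    have h2 : ∑ k ∈ Finset.range (n+1), ((27:ℂ)^k / (k:ℂ) * ((Aa (n-k) : ℝ):ℂ))
        = (((Aa n * (3 * harm (3*n) - harm n)) : ℝ) : ℂ) := by
      rw [← key n]
      push_cast
      rfl
    rw [h2, hF]
    push_cast
    field_simp
  have cauchy := tsum_mul_tsum_eq_tsum_sum_range_of_summable_norm hLs hFs
  rw [hlogsum.tsum_eq] at cauchy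
  calc ∑' (k : ℕ), F k * ((3 * harm (3 * k) - harm k : ℝ) : ℂ)
      = ∑' (n : ℕ), ∑ k ∈ Finset.range (n+1), L k * F (n-k) :=
        tsum_congr fun n => (coef n).symm
    _ = Complex.log (x / (x - 27)) * ∑' (n : ℕ), F n := cauchy.symm
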